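/- arXiv:2511.10144 — 3 statements merged into one kernel-verified Lean document; each statement's English description precedes it below -/
import Mathlib

section
/- For all d ≥ 1 and n ≥ d+1, the maximum diameter H_s(n,d) of a d-dimensional simplicial complex on n vertices with connected dual graph satisfies H_s(n,d) ≤ ⌊(1/d)·C(n,d) − (d+1)/d⌋. -/
open SimpleGraph Finset

lemma aux_dist_start_le {V : Type*} {G : SimpleGraph V} (hc : G.Connected) {u v : V}
    (p : G.Walk u v) (i : ℕ) : G.dist u (p.getVert i) ≤ i := by
  induction p generalizing i with
  | nil => simp [Walk.getVert, SimpleGraph.dist_self]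
  | @cons a b c h q ih =>
    cases i with
    | zero => simp
    | succ m =>
      have h1 : G.dist a b ≤ 1 := by
        simpa using SimpleGraph.dist_le (Walk.cons h Walk.nil)
      calc G.dist a ((Walk.cons h q).getVert (m+1))
          = G.dist a (q.getVert m) := by rw [Walk.getVert_cons_succ]
        _ ≤ G.dist a b + G.dist b (q.getVert m) := hc.dist_triangle
        _ ≤ 1 + m := Nat.add_le_add h1 (ih m)
        _ = m + 1 := Nat.add_comm _ _

lemma aux_dist_end_le {V : Type*} {G : SimpleGraph V} (hc : G.Connected) {u v : V}
    (p : G.Walk u v) (i : ℕ) : G.dist (p.getVert i) v ≤ p.length - i := by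
  by_cases hi : i ≤ p.length
  · have := aux_dist_start_le hc p.reverse (p.length - i)
    rwa [Walk.getVert_reverse, Nat.sub_sub_self hi, SimpleGraph.dist_comm] at this
  · rw [Walk.getVert_of_length_le p (le_of_not_ge hi)]
    simp [SimpleGraph.dist_self]

lemma aux_dist_getVert_ge {V : Type*} {G : SimpleGraph V} (hc : G.Connected) {u v : V}
    (p : G.Walk u v) (hlen : p.length = G.dist u v) {i j : ℕ} (hi : i ≤ p.length) :
    i - j ≤ G.dist (p.getVert j) (p.getVert i) := by
  have h1 := aux_dist_start_le hc p j
  have h2 := aux_dist_end_le hc p i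
  have h3 : G.dist u v ≤ G.dist u (p.getVert j) + G.dist (p.getVert j) (p.getVert i)
      + G.dist (p.getVert i) v :=
    le_trans hc.dist_triangle (Nat.add_le_add_right hc.dist_triangle _)
  omega

/-- The dual graph of a simplicial `d`-complex `F` on vertex set `Fin n`:
its vertices are the sets of size `d+1` in `F`, two of them being adjacent
iff their intersection has size `d`. -/
def dualGraph (n d : ℕ) (F : Finset (Finset (Fin n))) :
    SimpleGraph {s : Finset (Fin n) // s ∈ F ∧ s.card = d + 1} :=
  SimpleGraph.fromRel (fun s t => (s.val ∩ t.val).card = d)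

/-- For `d ≥ 1` and `n ≥ d+1`, every simplicial `d`-complex on `n` vertices with
connected dual graph has diameter at most `⌊(1/d)·C(n,d) − (d+1)/d⌋`, i.e. the
distance between any two vertices of the dual graph is at most
`(C(n,d) − (d+1)) / d` (floor division). -/
theorem diameter_upper_bound (n d : ℕ) (hd : 1 ≤ d) (hn : d + 1 ≤ n)
    (F : Finset (Finset (Fin n)))
    (hdown : ∀ s ∈ F, ∀ t ⊆ s, t ∈ F)
    (hdim : ∀ s ∈ F, s.card ≤ d + 1)
    (hmax : ∃ s ∈ F, s.card = d + 1)
    (hconn : (dualGraph n d F).Connected) :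
    ∀ u v, (dualGraph n d F).dist u v ≤ (n.choose d - (d + 1)) / d := by
  intro u v
  set G := dualGraph n d F with hG
  obtain ⟨p, hlen⟩ := hconn.exists_walk_length_eq_dist u v
  set ℓ := G.dist u v with hℓ
  -- the vertices along the walk
  set W : ℕ → {s : Finset (Fin n) // s ∈ F ∧ s.card = d + 1} := fun i => p.getVert i with hW
  -- adjacency gives intersection of size d
  have hadjcard : ∀ {a b : {s : Finset (Fin n) // s ∈ F ∧ s.card = d + 1}},
      G.Adj a b → (a.val ∩ b.val).card = d := by
    intro a b hab
    rw [hG, dualGraph, SimpleGraph.fromRel_adj] at hab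
    rcases hab.2 with h | h
    · exact h
    · rwa [Finset.inter_comm]
  -- vertices at distance ≥ 2 along the walk: intersection small
  have hfar2 : ∀ {i j : ℕ}, i ≤ ℓ → j + 2 ≤ i →
      ¬ G.Adj (W j) (W i) ∧ W j ≠ W i := by
    intro i j hi hji
    have hdge : 2 ≤ G.dist (W j) (W i) := by
      have h := aux_dist_getVert_ge hconn p hlen (i := i) (j := j) (by omega)
      have h2 : i - j ≤ G.dist (W j) (W i) := h
      omega
    constructor
    · intro hadj
      have : G.dist (W j) (W i) ≤ 1 := by
        simpa using SimpleGraph.dist_le (Walk.cons hadj Walk.nil)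
      omega
    · intro heq
      rw [heq] at hdge
      simp [SimpleGraph.dist_self] at hdge
  -- the d-subsets of each vertex
  set S : ℕ → Finset (Finset (Fin n)) := fun i => Finset.powersetCard d (W i).val with hS
  have hScard : ∀ i, (S i).card = d + 1 := by
    intro i
    rw [hS]
    simp only [Finset.card_powersetCard, (W i).2.2]
    exact Nat.choose_succ_self_right d
  set T : ℕ → Finset (Finset (Fin n)) := fun i => (Finset.range (i+1)).biUnion S with hT
  -- key counting claim
  have key : ∀ i, i ≤ ℓ → d + 1 + i * d ≤ (T i).card := by
    intro i
    induction i with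
    | zero =>
      intro _
      have : T 0 = S 0 := by simp [hT]
      rw [this, hScard]
      omega
    | succ m ih =>
      intro hm
      have hTm := ih (by omega)
      have hsplit : T (m+1) = T m ∪ S (m+1) := by
        show (Finset.range (m+1+1)).biUnion S = (Finset.range (m+1)).biUnion S ∪ S (m+1)
        rw [Finset.range_add_one, Finset.biUnion_insert, Finset.union_comm]
      -- S (m+1) ∩ T m ⊆ {(W m).val ∩ (W (m+1)).val}
      have hinter : S (m+1) ∩ T m ⊆ {(W m).val ∩ (W (m+1)).val} := by
        intro s hs
        rw [Finset.mem_inter] at hs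
        obtain ⟨hs1, hs2⟩ := hs
        rw [hS, Finset.mem_powersetCard] at hs1
        obtain ⟨hsub, hcard⟩ := hs1
        rw [hT, Finset.mem_biUnion] at hs2
        obtain ⟨j, hj, hsj⟩ := hs2
        rw [Finset.mem_range] at hj
        rw [hS, Finset.mem_powersetCard] at hsj
        obtain ⟨hsubj, _⟩ := hsj
        -- s ⊆ (W j).val ∩ (W (m+1)).val, so card of intersection ≥ d
        have hssub : s ⊆ (W j).val ∩ (W (m+1)).val := Finset.subset_inter hsubj hsub
        have hIcard : d ≤ ((W j).val ∩ (W (m+1)).val).card := by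
          exact le_trans (le_of_eq hcard.symm) (Finset.card_le_card hssub)
        -- j must be m
        have hjm : j = m := by
          by_contra hne
          have hj2 : j + 2 ≤ m + 1 := by omega
          obtain ⟨hnadj, hneq⟩ := hfar2 (by omega) hj2
          -- intersection has card ≥ d; card ≤ d+1
          have hle : ((W j).val ∩ (W (m+1)).val).card ≤ d + 1 := by
            calc ((W j).val ∩ (W (m+1)).val).card ≤ (W j).val.card :=
                  Finset.card_le_card Finset.inter_subset_left
              _ = d + 1 := (W j).2.2
          have hjc : (W j).val.card = d + 1 := (W j).2.2
          have hmc : (W (m+1)).val.card = d + 1 := (W (m+1)).2.2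
          rcases Nat.lt_or_ge ((W j).val ∩ (W (m+1)).val).card (d+1) with hlt | hge
          · -- card = d, so adjacent
            have hcd : ((W j).val ∩ (W (m+1)).val).card = d := by omega
            apply hnadj
            rw [hG, dualGraph, SimpleGraph.fromRel_adj]
            exact ⟨hneq, Or.inl hcd⟩
          · -- card = d+1, so equal
            have h1 : ((W j).val ∩ (W (m+1)).val) = (W j).val :=
              Finset.eq_of_subset_of_card_le Finset.inter_subset_left (by omega)
            have h2 : ((W j).val ∩ (W (m+1)).val) = (W (m+1)).val :=
              Finset.eq_of_subset_of_card_le Finset.inter_subset_right (by omega)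
            exact hneq (Subtype.ext (h1 ▸ h2))
        rw [hjm] at hssub
        -- the intersection with W m has card exactly d since adjacent
        have hadj : G.Adj (W m) (W (m+1)) := by
          have : m < p.length := by omega
          exact p.adj_getVert_succ this
        have hcd : ((W m).val ∩ (W (m+1)).val).card = d := hadjcard hadj
        have : s = (W m).val ∩ (W (m+1)).val :=
          Finset.eq_of_subset_of_card_le hssub (by omega)
        rw [Finset.mem_singleton]
        exact this
      have hintercard : (S (m+1) ∩ T m).card ≤ 1 := by
        calc (S (m+1) ∩ T m).card ≤ ({(W m).val ∩ (W (m+1)).val} : Finset _).card :=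
              Finset.card_le_card hinter
          _ = 1 := Finset.card_singleton _
      have hdiff : d ≤ (S (m+1) \ T m).card := by
        have := Finset.card_sdiff_add_card_inter (S (m+1)) (T m)
        rw [hScard (m+1)] at this
        omega
      have hcard : (T (m+1)).card = (S (m+1) \ T m).card + (T m).card := by
        rw [hsplit, Finset.union_comm, ← Finset.card_sdiff_add_card]
      rw [hcard]
      have : (m + 1) * d = m * d + d := by ring
      omega
  have hfinal : d + 1 + ℓ * d ≤ n.choose d := by
    have h1 := key ℓ le_rfl
    have h2 : T ℓ ⊆ Finset.powersetCard d (Finset.univ : Finset (Fin n)) := by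
      intro s hs
      rw [hT, Finset.mem_biUnion] at hs
      obtain ⟨j, _, hsj⟩ := hs
      rw [hS, Finset.mem_powersetCard] at hsj
      rw [Finset.mem_powersetCard]
      exact ⟨Finset.subset_univ s, hsj.2⟩
    have h3 : (Finset.powersetCard d (Finset.univ : Finset (Fin n))).card = n.choose d := by
      rw [Finset.card_powersetCard, Finset.card_univ, Fintype.card_fin]
    calc d + 1 + ℓ * d ≤ (T ℓ).card := h1
      _ ≤ _ := Finset.card_le_card h2
      _ = n.choose d := h3
  rw [Nat.le_div_iff_mul_le (by omega : 0 < d)]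
  omega
end

section
/- On a shortest path in the dual graph of a simplicial d-complex, every vertex after the first contains at least d sets of size d that are not contained in any earlier vertex of the path. -/
open SimpleGraph Finset

/-- A walk has a prefix walk to its `n`-th vertex of length at most `n`. -/
lemma walk_exists_prefix {V : Type*} {G : SimpleGraph V} {u v : V}
    (p : G.Walk u v) (n : ℕ) : ∃ q : G.Walk u (p.getVert n), q.length ≤ n := by
  induction p generalizing n with
  | nil => exact ⟨Walk.nil, Nat.zero_le _⟩
  | cons h q ih =>
    cases n with
    | zero => exact ⟨Walk.nil, Nat.zero_le _⟩
    | succ m =>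
      obtain ⟨r, hr⟩ := ih m
      exact ⟨r.cons h, by simpa using Nat.succ_le_succ hr⟩

/-- A walk has a suffix walk from its `n`-th vertex of length at most `length - n`. -/
lemma walk_exists_suffix {V : Type*} {G : SimpleGraph V} {u v : V}
    (p : G.Walk u v) (n : ℕ) :
    ∃ q : G.Walk (p.getVert n) v, q.length ≤ p.length - n := by
  induction p generalizing n with
  | nil => exact ⟨Walk.nil, Nat.zero_le _⟩
  | cons h q ih =>
    cases n with
    | zero => exact ⟨(Walk.cons h q).copy ((Walk.cons h q).getVert_zero).symm rfl, by simp⟩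
    | succ m =>
      obtain ⟨r, hr⟩ := ih m
      refine ⟨r.copy rfl rfl, ?_⟩
      simp only [Walk.length_copy, Walk.length_cons]
      show r.length ≤ _
      omega

/-- On a shortest path in the dual graph of a simplicial `d`-complex, every
vertex after the first contains at least `d` sets of size `d` that are not
contained in any earlier vertex of the path. -/
theorem shortest_path_new_ridges (n d : ℕ) (F : Finset (Finset (Fin n)))
    (hdown : ∀ s ∈ F, ∀ t ⊆ s, t ∈ F)
    (hdim : ∀ s ∈ F, s.card ≤ d + 1)
    (hmax : ∃ s ∈ F, s.card = d + 1)
    {u v : {s : Finset (Fin n) // s ∈ F ∧ s.card = d + 1}}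
    (w : (dualGraph n d F).Walk u v)
    (hshort : w.length = (dualGraph n d F).dist u v) :
    ∀ i, 1 ≤ i → i ≤ w.length →
      d ≤ {t : Finset (Fin n) | t.card = d ∧ t ⊆ (w.getVert i).val ∧
            ∀ j < i, ¬ t ⊆ (w.getVert j).val}.ncard := by
  classical
  intro i hi1 hiL
  -- shortcut lemmas
  have key0 : ∀ j k : ℕ, k ≤ w.length → w.getVert j = w.getVert k → k ≤ j := by
    intro j k hk heq
    obtain ⟨q1, hq1⟩ := walk_exists_prefix w j
    obtain ⟨q3, hq3⟩ := walk_exists_suffix w k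
    have hd := SimpleGraph.dist_le (q1.append (q3.copy heq.symm rfl))
    rw [← hshort] at hd
    simp only [Walk.length_append, Walk.length_copy] at hd
    omega
  have key1 : ∀ j k : ℕ, k ≤ w.length →
      (dualGraph n d F).Adj (w.getVert j) (w.getVert k) → k ≤ j + 1 := by
    intro j k hk hadj
    obtain ⟨q1, hq1⟩ := walk_exists_prefix w j
    obtain ⟨q3, hq3⟩ := walk_exists_suffix w k
    have hd := SimpleGraph.dist_le (q1.append (Walk.cons hadj q3))
    rw [← hshort] at hd
    simp only [Walk.length_append, Walk.length_cons] at hd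
    omega
  set s : Finset (Fin n) := (w.getVert i).val with hs_def
  have hs : s.card = d + 1 := (w.getVert i).2.2
  set T := s.powersetCard d with hT_def
  have hT : T.card = d + 1 := by
    rw [hT_def, Finset.card_powersetCard, hs, Nat.choose_succ_self_right]
  set P : Finset (Fin n) → Prop := fun t => ∃ j < i, t ⊆ (w.getVert j).val with hP_def
  -- at most one d-subset of s is contained in an earlier vertex
  have hB : (T.filter P).card ≤ 1 := by
    rw [Finset.card_le_one]
    intro t1 h1 t2 h2
    by_contra hne
    simp only [Finset.mem_filter, Finset.mem_powersetCard, hP_def, hT_def] at h1 h2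
    obtain ⟨⟨ht1s, ht1c⟩, j1, hj1, hj1sub⟩ := h1
    obtain ⟨⟨ht2s, ht2c⟩, j2, hj2, hj2sub⟩ := h2
    have claim : ∀ (t : Finset (Fin n)) (j : ℕ), t.card = d → t ⊆ s → j < i →
        t ⊆ (w.getVert j).val → t ⊆ (w.getVert (i-1)).val := by
      intro t j htc hts hj hsub
      have hne' : w.getVert j ≠ w.getVert i := by
        intro h
        have := key0 j i hiL h
        omega
      have hinter : ((w.getVert j).val ∩ s).card = d := by
        have h1 : t ⊆ (w.getVert j).val ∩ s := Finset.subset_inter hsub hts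
        have h2 : d ≤ ((w.getVert j).val ∩ s).card := by
          have := Finset.card_le_card h1; rwa [htc] at this
        have h3 : ((w.getVert j).val ∩ s) ⊆ s := Finset.inter_subset_right
        have h4 : ((w.getVert j).val ∩ s).card ≤ d + 1 := by
          have := Finset.card_le_card h3; rwa [hs] at this
        by_contra hcd
        have hcd1 : ((w.getVert j).val ∩ s).card = d + 1 := by omega
        have he : (w.getVert j).val ∩ s = s :=
          Finset.eq_of_subset_of_card_le h3 (by omega)
        have hss : s ⊆ (w.getVert j).val := by
          intro x hx
          have : x ∈ (w.getVert j).val ∩ s := he.symm ▸ hx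
          exact (Finset.mem_inter.mp this).1
        have : (w.getVert j).val = s :=
          ((Finset.eq_of_subset_of_card_le hss (by rw [hs, (w.getVert j).2.2])).symm)
        exact hne' (Subtype.ext this)
      have hadj : (dualGraph n d F).Adj (w.getVert j) (w.getVert i) := by
        exact (SimpleGraph.fromRel_adj _ _ _).mpr ⟨hne', Or.inl hinter⟩
      have hle := key1 j i hiL hadj
      have hjeq : j = i - 1 := by omega
      rwa [hjeq] at hsub
    have h1' := claim t1 j1 ht1c ht1s hj1 hj1sub
    have h2' := claim t2 j2 ht2c ht2s hj2 hj2sub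
    have hu_sub : t1 ∪ t2 ⊆ s := Finset.union_subset ht1s ht2s
    have hcu : d + 1 ≤ (t1 ∪ t2).card := by
      by_contra h
      push_neg at h
      have e1 : t1 = t1 ∪ t2 :=
        Finset.eq_of_subset_of_card_le Finset.subset_union_left (by omega)
      have e2 : t2 = t1 ∪ t2 :=
        Finset.eq_of_subset_of_card_le Finset.subset_union_right (by omega)
      exact hne (e1.trans e2.symm)
    have hus : s = t1 ∪ t2 := Finset.eq_of_subset_of_card_le hu_sub (by omega) |>.symm
    have hss : s ⊆ (w.getVert (i-1)).val := hus ▸ Finset.union_subset h1' h2'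
    have heq : (w.getVert (i-1)).val = s :=
      (Finset.eq_of_subset_of_card_le hss (by rw [hs, (w.getVert (i-1)).2.2])).symm
    have := key0 (i-1) i hiL (Subtype.ext heq.symm ▸ rfl)
    omega
  have hA : {t : Finset (Fin n) | t.card = d ∧ t ⊆ s ∧
        ∀ j < i, ¬ t ⊆ (w.getVert j).val}.ncard
      = (T.filter (fun t => ¬ P t)).card := by
    rw [← Set.ncard_coe_finset]
    congr 1
    ext t
    simp only [Finset.coe_filter, Finset.mem_powersetCard, hP_def, Set.mem_setOf_eq, hT_def,
      not_exists, not_and]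
    tauto
  have hsum := Finset.card_filter_add_card_filter_not (s := T) (p := P)
  rw [hT] at hsum
  omega
end

section
/- For every ℓ ≥ 3 and n = 8ℓ+1, the sequence (3, 2, 7, 6, 11, 10, ..., 4ℓ−1, 4ℓ−2) (alternately adding 5 and subtracting 1, of length 2ℓ) has sum 4ℓ² + ℓ, which is coprime to 8ℓ+1, and the multiset {±a_i} ∪ {±(a_i + a_{i+1}) : i < 2ℓ−1} ∪ {±(a_{2ℓ−2} + a_{2ℓ−1} + a_0)} consists of 8ℓ distinct nonzero residues modulo 8ℓ+1. -/
/-- The black sequence `(3, 2, 7, 6, 11, 10, …)` given by `b_{2j} = 4j + 3` and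
`b_{2j+1} = 4j + 2`. -/
def seqB : ℕ → ℕ := fun i =>
  if i % 2 = 0 then 4 * (i / 2) + 3 else 4 * (i / 2) + 2

/-- The black sequence viewed in `ZMod (8ℓ+1)`. -/
def seqb (ℓ : ℕ) (i : ℕ) : ZMod (8 * ℓ + 1) := (seqB i : ZMod (8 * ℓ + 1))

/-- The set of covered residues for `n = 8ℓ+1`: the `±` entries `±b_i`, the
consecutive sums `±(b_i + b_{i+1})` for `i < 2ℓ−1`, and the turn residue
`±(b_{2ℓ−2} + b_{2ℓ−1} + b_0)`. -/
def coveredResidues (ℓ : ℕ) : Finset (ZMod (8 * ℓ + 1)) :=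
  ((Finset.range (2 * ℓ)).biUnion (fun i => {seqb ℓ i, -seqb ℓ i})) ∪
  ((Finset.range (2 * ℓ - 1)).biUnion
    (fun i => {seqb ℓ i + seqb ℓ (i + 1), -(seqb ℓ i + seqb ℓ (i + 1))})) ∪
  ({seqb ℓ (2 * ℓ - 2) + seqb ℓ (2 * ℓ - 1) + seqb ℓ 0,
    -(seqb ℓ (2 * ℓ - 2) + seqb ℓ (2 * ℓ - 1) + seqb ℓ 0)} :
      Finset (ZMod (8 * ℓ + 1)))

namespace GenSeqAux

lemma seqB_add (i : ℕ) : seqB i + seqB (i + 1) = 4 * i + 5 := by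
  unfold seqB; split_ifs <;> omega

lemma seqB_bounds {ℓ i : ℕ} (h : i < 2 * ℓ) : 2 ≤ seqB i ∧ seqB i ≤ 4 * ℓ - 1 := by
  unfold seqB; split_ifs <;> omega

lemma neg_cast {n : ℕ} {m : ℕ} (h : m ≤ n) : -(m : ZMod n) = ((n - m : ℕ) : ZMod n) := by
  have h2 : ((n - m : ℕ) : ZMod n) + (m : ZMod n) = ((n : ℕ) : ZMod n) := by
    rw [← Nat.cast_add]; congr 1; omega
  rw [ZMod.natCast_self] at h2
  linear_combination -h2

lemma sum_seqB (ℓ : ℕ) : (∑ i ∈ Finset.range (2 * ℓ), seqB i) = 4 * ℓ ^ 2 + ℓ := by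
  induction ℓ with
  | zero => simp
  | succ k ih =>
    have h : 2 * (k + 1) = (2 * k) + 1 + 1 := by ring
    rw [h, Finset.sum_range_succ, Finset.sum_range_succ, ih]
    have h1 : seqB (2 * k) = 4 * k + 3 := by unfold seqB; split_ifs <;> omega
    have h2 : seqB (2 * k + 1) = 4 * k + 2 := by unfold seqB; split_ifs <;> omega
    rw [h1, h2]; ring

lemma copr (ℓ : ℕ) : Nat.Coprime (4 * ℓ ^ 2 + ℓ) (8 * ℓ + 1) := by
  rw [← Nat.isCoprime_iff_coprime]
  exact ⟨-16, (8 * ℓ + 1 : ℤ), by push_cast; ring⟩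

-- turn value
lemma turn_val {ℓ : ℕ} (hℓ : 3 ≤ ℓ) :
    seqB (2 * ℓ - 2) + seqB (2 * ℓ - 1) + seqB 0 = 8 * ℓ := by
  unfold seqB; split_ifs <;> omega

lemma entry_exists {ℓ m : ℕ} (h2 : 2 ≤ m) (h3 : m ≤ 4 * ℓ - 1)
    (h4 : m % 4 = 2 ∨ m % 4 = 3) : ∃ i < 2 * ℓ, seqB i = m := by
  rcases h4 with h | h
  · exact ⟨2 * (m / 4) + 1, by omega, by unfold seqB; split_ifs <;> omega⟩
  · exact ⟨2 * (m / 4), by omega, by unfold seqB; split_ifs <;> omega⟩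

lemma sum_exists {ℓ m : ℕ} (hℓ : 3 ≤ ℓ) (h1 : m % 4 = 1) (h2 : 5 ≤ m) (h3 : m ≤ 8 * ℓ - 3) :
    ∃ i < 2 * ℓ - 1, seqB i + seqB (i + 1) = m := by
  refine ⟨(m - 5) / 4, by omega, ?_⟩
  rw [seqB_add]; omega

lemma covered_eq (ℓ : ℕ) (hℓ : 3 ≤ ℓ) :
    coveredResidues ℓ =
      (Finset.Icc 1 (8 * ℓ)).image (fun m : ℕ => (m : ZMod (8 * ℓ + 1))) := by
  have hmemT : ∀ m : ℕ, 1 ≤ m → m ≤ 8 * ℓ →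
      ((m : ℕ) : ZMod (8 * ℓ + 1)) ∈
        (Finset.Icc 1 (8 * ℓ)).image (fun m : ℕ => (m : ZMod (8 * ℓ + 1))) :=
    fun m h1 h2 => Finset.mem_image.2 ⟨m, Finset.mem_Icc.2 ⟨h1, h2⟩, rfl⟩
  ext x
  simp only [coveredResidues, Finset.mem_union, Finset.mem_biUnion, Finset.mem_range,
    Finset.mem_insert, Finset.mem_singleton]
  constructor
  · rintro ((⟨i, hi, hx | hx⟩ | ⟨i, hi, hx | hx⟩) | hx | hx) <;> subst hx
    · exact hmemT _ (by have := seqB_bounds hi; omega) (by have := seqB_bounds hi; omega)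
    · rw [show seqb ℓ i = ((seqB i : ℕ) : ZMod (8*ℓ+1)) from rfl,
        neg_cast (by have := seqB_bounds hi; omega)]
      exact hmemT _ (by have := seqB_bounds hi; omega) (by have := seqB_bounds hi; omega)
    · have : seqb ℓ i + seqb ℓ (i+1) = ((4*i+5 : ℕ) : ZMod (8*ℓ+1)) := by
        rw [show seqb ℓ i + seqb ℓ (i+1) = ((seqB i + seqB (i+1) : ℕ) : ZMod (8*ℓ+1)) by
          push_cast; rfl, seqB_add]
      rw [this]; exact hmemT _ (by omega) (by omega)
    · have : seqb ℓ i + seqb ℓ (i+1) = ((4*i+5 : ℕ) : ZMod (8*ℓ+1)) := by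
        rw [show seqb ℓ i + seqb ℓ (i+1) = ((seqB i + seqB (i+1) : ℕ) : ZMod (8*ℓ+1)) by
          push_cast; rfl, seqB_add]
      rw [this, neg_cast (by omega)]
      exact hmemT _ (by omega) (by omega)
    · have : seqb ℓ (2*ℓ-2) + seqb ℓ (2*ℓ-1) + seqb ℓ 0 = ((8*ℓ : ℕ) : ZMod (8*ℓ+1)) := by
        rw [show seqb ℓ (2*ℓ-2) + seqb ℓ (2*ℓ-1) + seqb ℓ 0
            = ((seqB (2*ℓ-2) + seqB (2*ℓ-1) + seqB 0 : ℕ) : ZMod (8*ℓ+1)) by push_cast; rfl,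
          turn_val hℓ]
      rw [this]; exact hmemT _ (by omega) (by omega)
    · have : seqb ℓ (2*ℓ-2) + seqb ℓ (2*ℓ-1) + seqb ℓ 0 = ((8*ℓ : ℕ) : ZMod (8*ℓ+1)) := by
        rw [show seqb ℓ (2*ℓ-2) + seqb ℓ (2*ℓ-1) + seqb ℓ 0
            = ((seqB (2*ℓ-2) + seqB (2*ℓ-1) + seqB 0 : ℕ) : ZMod (8*ℓ+1)) by push_cast; rfl,
          turn_val hℓ]
      rw [this, neg_cast (by omega)]
      exact hmemT _ (by omega) (by omega)
  · rintro hx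
    obtain ⟨m, hm, rfl⟩ := Finset.mem_image.1 hx
    rw [Finset.mem_Icc] at hm
    have hturn : seqb ℓ (2*ℓ-2) + seqb ℓ (2*ℓ-1) + seqb ℓ 0 = ((8*ℓ : ℕ) : ZMod (8*ℓ+1)) := by
      rw [show seqb ℓ (2*ℓ-2) + seqb ℓ (2*ℓ-1) + seqb ℓ 0
          = ((seqB (2*ℓ-2) + seqB (2*ℓ-1) + seqB 0 : ℕ) : ZMod (8*ℓ+1)) by push_cast; rfl,
        turn_val hℓ]
    rcases Nat.lt_or_ge (m % 4) 2 with hr | hr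
    · -- m % 4 = 0 or 1 : sums and turn
      rcases Nat.eq_or_lt_of_le hm.1 with h1 | h1
      · -- m = 1 : neg turn
        right; right
        rw [hturn, neg_cast (by omega), show 8*ℓ+1 - 8*ℓ = 1 by omega, ← h1]
      rcases Nat.eq_or_lt_of_le hm.2 with h2 | h2
      · -- check m = 8ℓ : turn
        right; left
        rw [hturn, h2]
      -- now 2 ≤ m ≤ 8ℓ-1, m % 4 ∈ {0,1}
      rcases Nat.lt_or_ge (m % 4) 1 with hr0 | hr1
      · -- m % 4 = 0, 4 ≤ m ≤ 8ℓ-4 : neg sum with m' = 8ℓ+1-m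
        obtain ⟨i, hi, hiv⟩ := sum_exists hℓ (m := 8*ℓ+1-m) (by omega) (by omega) (by omega)
        left; right
        refine ⟨i, hi, Or.inr ?_⟩
        rw [show seqb ℓ i + seqb ℓ (i+1) = ((seqB i + seqB (i+1) : ℕ) : ZMod (8*ℓ+1)) by
          push_cast; rfl, hiv, neg_cast (by omega)]
        congr 1; omega
      · -- m % 4 = 1, 5 ≤ m ≤ 8ℓ-3 : sum
        obtain ⟨i, hi, hiv⟩ := sum_exists hℓ (m := m) (by omega) (by omega) (by omega)
        left; right
        refine ⟨i, hi, Or.inl ?_⟩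
        rw [show seqb ℓ i + seqb ℓ (i+1) = ((seqB i + seqB (i+1) : ℕ) : ZMod (8*ℓ+1)) by
          push_cast; rfl, hiv]
    · -- m % 4 = 2 or 3 : entries
      rcases Nat.lt_or_ge m (4*ℓ) with h1 | h1
      · obtain ⟨i, hi, hiv⟩ := entry_exists (ℓ := ℓ) (m := m) (by omega) (by omega) (by omega)
        left; left
        exact ⟨i, hi, Or.inl (by rw [show seqb ℓ i = ((seqB i : ℕ) : ZMod (8*ℓ+1)) from rfl, hiv])⟩
      · -- 4ℓ+2 ≤ m ≤ 8ℓ-1 : neg entry with m' = 8ℓ+1-m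
        obtain ⟨i, hi, hiv⟩ := entry_exists (ℓ := ℓ) (m := 8*ℓ+1-m) (by omega) (by omega) (by omega)
        left; left
        refine ⟨i, hi, Or.inr ?_⟩
        rw [show seqb ℓ i = ((seqB i : ℕ) : ZMod (8*ℓ+1)) from rfl, hiv, neg_cast (by omega)]
        congr 1; omega

end GenSeqAux

/-- For every `ℓ ≥ 3` and `n = 8ℓ+1`, the sequence `(3, 2, 7, 6, 11, 10, …,
4ℓ−1, 4ℓ−2)` of length `2ℓ` has sum `4ℓ² + ℓ`, which is coprime to `8ℓ+1`, and
the entries `±b_i`, the consecutive sums `±(b_i + b_{i+1})` for `i < 2ℓ−1` and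
the turn residue `±(b_{2ℓ−2} + b_{2ℓ−1} + b_0)` form `8ℓ` distinct nonzero
residues modulo `8ℓ+1`. -/
theorem generating_sequence_case_even (ℓ : ℕ) (hℓ : 3 ≤ ℓ) :
    (∑ i ∈ Finset.range (2 * ℓ), seqB i) = 4 * ℓ ^ 2 + ℓ ∧
    Nat.Coprime (4 * ℓ ^ 2 + ℓ) (8 * ℓ + 1) ∧
    (coveredResidues ℓ).card = 8 * ℓ ∧
    (0 : ZMod (8 * ℓ + 1)) ∉ coveredResidues ℓ := by
  haveI : NeZero (8 * ℓ + 1) := ⟨by omega⟩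
  rw [GenSeqAux.covered_eq ℓ hℓ]
  refine ⟨GenSeqAux.sum_seqB ℓ, GenSeqAux.copr ℓ, ?_, ?_⟩
  · rw [Finset.card_image_of_injOn, Nat.card_Icc]
    · omega
    · intro a ha b hb h
      simp only [Finset.coe_Icc, Set.mem_Icc] at ha hb
      have := congrArg ZMod.val h
      rwa [ZMod.val_cast_of_lt (by omega), ZMod.val_cast_of_lt (by omega)] at this
  · intro h
    obtain ⟨m, hm, hm0⟩ := Finset.mem_image.1 h
    rw [Finset.mem_Icc] at hm
    have := congrArg ZMod.val hm0
    rw [ZMod.val_cast_of_lt (by omega), ZMod.val_zero] at this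
    omega
end
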